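/- arXiv:2110.12203 — 3 statements merged into one kernel-verified Lean document; each statement's English description precedes it below -/
import Mathlib

section
/- If (X,Y) is distributed according to the Archimedean law, then for every t ∈ [0,1] the random variable A_t = X cos(πt) + Y sin(πt) is uniformly distributed on [-1,1]. -/
open MeasureTheory Real Set

/-- The Archimedean law: the measure on `ℝ × ℝ` with density
`1/(2π√(1-x²-y²))` on the open unit disk and zero outside. -/
noncomputable def archMeasure : Measure (ℝ × ℝ) :=
  volume.withDensity (fun p =>
    if p.1 ^ 2 + p.2 ^ 2 < 1 then
      ENNReal.ofReal (1 / (2 * π * Real.sqrt (1 - p.1 ^ 2 - p.2 ^ 2)))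
    else 0)

lemma archDensity_measurable : Measurable (fun p : ℝ × ℝ =>
    if p.1 ^ 2 + p.2 ^ 2 < 1 then
      ENNReal.ofReal (1 / (2 * π * Real.sqrt (1 - p.1 ^ 2 - p.2 ^ 2)))
    else 0) := by
  apply Measurable.ite
  · exact measurableSet_lt (by fun_prop) measurable_const
  · apply ENNReal.measurable_ofReal.comp
    apply Measurable.div measurable_const
    fun_prop
  · exact measurable_const

lemma lintegral_image_abs_deriv_mul {s : Set ℝ} {f f' : ℝ → ℝ} (hs : MeasurableSet s)
    (hf' : ∀ x ∈ s, HasDerivWithinAt f (f' x) s x) (hf : InjOn f s) (g : ℝ → ENNReal) :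
    ∫⁻ x in f '' s, g x = ∫⁻ x in s, ENNReal.ofReal |f' x| * g (f x) := by
  simpa only [ContinuousLinearMap.det_toSpanSingleton] using
    lintegral_image_eq_lintegral_abs_det_fderiv_mul volume hs
      (fun x hx => (hf' x hx).hasFDerivWithinAt) hf g

lemma inner_slice (x : ℝ) :
    ∫⁻ y : ℝ, (if x ^ 2 + y ^ 2 < 1 then
        ENNReal.ofReal (1 / (2 * π * Real.sqrt (1 - x ^ 2 - y ^ 2))) else 0)
      = if x ^ 2 < 1 then ENNReal.ofReal (1 / 2) else 0 := by
  by_cases hx : x ^ 2 < 1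
  · rw [if_pos hx]
    set r := Real.sqrt (1 - x ^ 2) with hr_def
    have hr : 0 < r := Real.sqrt_pos.2 (by linarith)
    have hr2 : r ^ 2 = 1 - x ^ 2 := Real.sq_sqrt (by linarith)
    have hmem : ∀ y : ℝ, x ^ 2 + y ^ 2 < 1 ↔ y ∈ Ioo (-r) r := by
      intro y
      rw [mem_Ioo]
      constructor
      · intro h
        have hy2 : y ^ 2 < r ^ 2 := by linarith
        constructor
        · by_contra hc; push_neg at hc; nlinarith
        · by_contra hc; push_neg at hc; nlinarith
      · rintro ⟨h1, h2⟩
        nlinarith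
    have hind : (fun y : ℝ => (if x ^ 2 + y ^ 2 < 1 then
        ENNReal.ofReal (1 / (2 * π * Real.sqrt (1 - x ^ 2 - y ^ 2))) else 0))
        = (Ioo (-r) r).indicator
            (fun y => ENNReal.ofReal (1 / (2 * π * Real.sqrt (1 - x ^ 2 - y ^ 2)))) := by
      funext y
      by_cases h : y ∈ Ioo (-r) r
      · rw [indicator_of_mem h, if_pos ((hmem y).2 h)]
      · rw [indicator_of_notMem h, if_neg (fun hc => h ((hmem y).1 hc))]
    rw [hind, lintegral_indicator measurableSet_Ioo]
    have himg : (fun θ : ℝ => r * Real.sin θ) '' Ioo (-(π/2)) (π/2) = Ioo (-r) r := by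
      ext y
      constructor
      · rintro ⟨θ, hθ, rfl⟩
        obtain ⟨h1, h2⟩ := hθ
        have hs1 : Real.sin θ < 1 := by
          have := Real.strictMonoOn_sin (Set.mem_Icc.2 ⟨h1.le, h2.le⟩)
            (Set.mem_Icc.2 ⟨by linarith [Real.pi_pos], le_refl (π/2)⟩) h2
          simpa using this
        have hs2 : -1 < Real.sin θ := by
          have := Real.strictMonoOn_sin (Set.mem_Icc.2 ⟨le_refl (-(π/2)), by linarith [Real.pi_pos]⟩)
            (Set.mem_Icc.2 ⟨h1.le, h2.le⟩) h1
          simpa using this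
        constructor
        · show -r < r * Real.sin θ
          nlinarith [mul_pos hr (by linarith : (0:ℝ) < Real.sin θ + 1)]
        · show r * Real.sin θ < r
          nlinarith [mul_pos hr (by linarith : (0:ℝ) < 1 - Real.sin θ)]
      · rintro ⟨h1, h2⟩
        refine ⟨Real.arcsin (y / r), ⟨?_, ?_⟩, ?_⟩
        · exact Real.neg_pi_div_two_lt_arcsin.2 (by rw [neg_lt, ← neg_div]; exact (div_lt_one hr).2 (by linarith))
        · exact Real.arcsin_lt_pi_div_two.2 ((div_lt_one hr).2 h2)
        · show r * Real.sin (Real.arcsin (y / r)) = y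
          rw [Real.sin_arcsin (by rw [neg_le, ← neg_div]; exact (div_le_one hr).2 (by linarith))
            ((div_le_one hr).2 h2.le)]
          field_simp
    have hderiv : ∀ θ ∈ Ioo (-(π/2)) (π/2),
        HasDerivWithinAt (fun θ : ℝ => r * Real.sin θ) (r * Real.cos θ) (Ioo (-(π/2)) (π/2)) θ :=
      fun θ _ => ((Real.hasDerivAt_sin θ).const_mul r).hasDerivWithinAt
    have hinj : InjOn (fun θ : ℝ => r * Real.sin θ) (Ioo (-(π/2)) (π/2)) := by
      intro a ha b hb h
      have : Real.sin a = Real.sin b := mul_left_cancel₀ hr.ne' h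
      exact Real.strictMonoOn_sin.injOn (Ioo_subset_Icc_self ha) (Ioo_subset_Icc_self hb) this
    rw [← himg, lintegral_image_abs_deriv_mul measurableSet_Ioo hderiv hinj]
    have hcongr : ∀ θ ∈ Ioo (-(π/2)) (π/2),
        ENNReal.ofReal |r * Real.cos θ| *
          ENNReal.ofReal (1 / (2 * π * Real.sqrt (1 - x ^ 2 - (r * Real.sin θ) ^ 2)))
        = ENNReal.ofReal (1 / (2 * π)) := by
      intro θ hθ
      have hcos : 0 < Real.cos θ := Real.cos_pos_of_mem_Ioo hθ
      have hrc : 0 < r * Real.cos θ := mul_pos hr hcos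
      have hsq : 1 - x ^ 2 - (r * Real.sin θ) ^ 2 = (r * Real.cos θ) ^ 2 := by
        have := Real.sin_sq_add_cos_sq θ
        nlinarith
      rw [hsq, Real.sqrt_sq hrc.le, abs_of_pos hrc, ← ENNReal.ofReal_mul hrc.le]
      congr 1
      field_simp
    rw [setLIntegral_congr_fun measurableSet_Ioo hcongr,
      setLIntegral_const, Real.volume_Ioo]
    rw [← ENNReal.ofReal_mul (by positivity)]
    congr 1
    have hπ : π ≠ 0 := Real.pi_ne_zero
    field_simp
    ring
  · rw [if_neg hx]
    have : ∀ y : ℝ, ¬ (x ^ 2 + y ^ 2 < 1) := by intro y h; nlinarith [sq_nonneg y]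
    simp [this]

lemma archMeasure_rot_invariant (t : ℝ) :
    Measure.map (⇑(Matrix.toLin (Module.Basis.finTwoProd ℝ) (Module.Basis.finTwoProd ℝ)
        !![Real.cos (π*t), Real.sin (π*t); -Real.sin (π*t), Real.cos (π*t)])) archMeasure
      = archMeasure := by
  set c := Real.cos (π*t)
  set s := Real.sin (π*t)
  have hcs : s ^ 2 + c ^ 2 = 1 := Real.sin_sq_add_cos_sq (π*t)
  set L := Matrix.toLin (Module.Basis.finTwoProd ℝ) (Module.Basis.finTwoProd ℝ) !![c, s; -s, c] with hL
  have hdet : LinearMap.det L = 1 := by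
    rw [hL, LinearMap.det_toLin]
    rw [Matrix.det_fin_two_of]
    nlinarith
  have hcont : Continuous L := L.continuous_of_finiteDimensional
  have hvol : MeasurePreserving (⇑L) volume volume := by
    refine ⟨hcont.measurable, ?_⟩
    rw [Measure.map_linearMap_addHaar_eq_smul_addHaar volume (by rw [hdet]; norm_num), hdet]
    simp
  ext u hu
  rw [Measure.map_apply hcont.measurable hu, archMeasure,
    withDensity_apply _ (hcont.measurable hu), withDensity_apply _ hu]
  have happ : ∀ p : ℝ × ℝ, L p = (c * p.1 + s * p.2, -s * p.1 + c * p.2) := fun p =>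
    Matrix.toLin_finTwoProd_apply c s (-s) c p
  have hg : ∀ p : ℝ × ℝ, (fun q : ℝ × ℝ =>
      if q.1 ^ 2 + q.2 ^ 2 < 1 then
        ENNReal.ofReal (1 / (2 * π * Real.sqrt (1 - q.1 ^ 2 - q.2 ^ 2)))
      else 0) (L p) = (fun q : ℝ × ℝ =>
      if q.1 ^ 2 + q.2 ^ 2 < 1 then
        ENNReal.ofReal (1 / (2 * π * Real.sqrt (1 - q.1 ^ 2 - q.2 ^ 2)))
      else 0) p := by
    intro p
    have h1 : (L p).1 ^ 2 + (L p).2 ^ 2 = p.1 ^ 2 + p.2 ^ 2 := by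
      rw [happ]; dsimp; nlinarith
    simp only [h1]
    congr 2
    rw [show (1 : ℝ) - (L p).1 ^ 2 - (L p).2 ^ 2 = 1 - ((L p).1 ^ 2 + (L p).2 ^ 2) by ring, h1]
    ring
  calc ∫⁻ p in ⇑L ⁻¹' u, (fun q : ℝ × ℝ =>
      if q.1 ^ 2 + q.2 ^ 2 < 1 then
        ENNReal.ofReal (1 / (2 * π * Real.sqrt (1 - q.1 ^ 2 - q.2 ^ 2)))
      else 0) p ∂volume
      = ∫⁻ p in ⇑L ⁻¹' u, (fun q : ℝ × ℝ =>
      if q.1 ^ 2 + q.2 ^ 2 < 1 then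
        ENNReal.ofReal (1 / (2 * π * Real.sqrt (1 - q.1 ^ 2 - q.2 ^ 2)))
      else 0) (L p) ∂volume := by
        refine lintegral_congr fun p => (hg p).symm
    _ = ∫⁻ q in u, (fun q : ℝ × ℝ =>
      if q.1 ^ 2 + q.2 ^ 2 < 1 then
        ENNReal.ofReal (1 / (2 * π * Real.sqrt (1 - q.1 ^ 2 - q.2 ^ 2)))
      else 0) q ∂volume := hvol.setLIntegral_comp_preimage hu archDensity_measurable

lemma archMeasure_fst_marginal : Measure.map Prod.fst archMeasure
    = ENNReal.ofReal (1 / 2) • volume.restrict (Icc (-1 : ℝ) 1) := by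
  rw [← Measure.restrict_congr_set Ioo_ae_eq_Icc]
  ext u hu
  rw [Measure.map_apply measurable_fst hu, archMeasure,
    withDensity_apply _ (measurable_fst hu)]
  have hpre : (Prod.fst ⁻¹' u : Set (ℝ × ℝ)) = u ×ˢ univ := by
    ext p; simp
  rw [hpre, Measure.volume_eq_prod ℝ ℝ, ← Measure.prod_restrict, Measure.restrict_univ]
  rw [lintegral_prod _ archDensity_measurable.aemeasurable]
  simp only
  have : ∀ x : ℝ, ∫⁻ y : ℝ, (if x ^ 2 + y ^ 2 < 1 then
        ENNReal.ofReal (1 / (2 * π * Real.sqrt (1 - x ^ 2 - y ^ 2))) else 0)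
      = (Ioo (-1 : ℝ) 1).indicator (fun _ => ENNReal.ofReal (1 / 2)) x := by
    intro x
    rw [inner_slice x]
    by_cases hx : x ^ 2 < 1
    · rw [if_pos hx, indicator_of_mem]
      constructor
      · by_contra hc; push_neg at hc; nlinarith
      · by_contra hc; push_neg at hc; nlinarith
    · rw [if_neg hx, indicator_of_notMem]
      intro hm
      obtain ⟨h1, h2⟩ := hm
      exact hx (by nlinarith)
  rw [lintegral_congr this, lintegral_indicator measurableSet_Ioo, setLIntegral_const,
    Measure.smul_apply, Measure.restrict_apply hu, Measure.restrict_apply measurableSet_Ioo,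
    smul_eq_mul, inter_comm]

/-- If `(X,Y)` is Archimedean-distributed, then for every `t ∈ [0,1]` the random
variable `A_t = X cos(πt) + Y sin(πt)` is uniformly distributed on `[-1,1]`. -/
theorem sineCurve_marginal_uniform (t : ℝ) (ht : t ∈ Icc (0 : ℝ) 1) :
    Measure.map (fun p : ℝ × ℝ => p.1 * Real.cos (π * t) + p.2 * Real.sin (π * t))
      archMeasure = ENNReal.ofReal (1 / 2) • volume.restrict (Icc (-1 : ℝ) 1) := by
  set c := Real.cos (π * t)
  set s := Real.sin (π * t)
  set L := Matrix.toLin (Module.Basis.finTwoProd ℝ) (Module.Basis.finTwoProd ℝ) !![c, s; -s, c] with hL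
  have hcont : Continuous L := L.continuous_of_finiteDimensional
  have hfun : (fun p : ℝ × ℝ => p.1 * c + p.2 * s) = Prod.fst ∘ ⇑L := by
    funext p
    simp only [Function.comp_apply, hL, Matrix.toLin_finTwoProd_apply]
    ring
  rw [hfun, ← Measure.map_map measurable_fst hcont.measurable,
    archMeasure_rot_invariant t, archMeasure_fst_marginal]
end

section
/- If a sequence of empirical measures of permutations μ_{σ_N} converges weakly to a measure μ on [0,1]², then μ has uniform marginals, i.e. μ is a permuton. -/
open MeasureTheory Set Filter Topology BoundedContinuousFunction ENNReal

/-- The empirical measure of a permutation `σ ∈ S_N`: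
`μ_σ = (1/N)∑_{i=1}^N δ_{(i/N, σ(i)/N)}`. -/
noncomputable def empMeasure (N : ℕ) (σ : Equiv.Perm (Fin N)) : Measure (ℝ × ℝ) :=
  (N : ℝ≥0∞)⁻¹ • ∑ i : Fin N,
    Measure.dirac ((((i : ℕ) + 1 : ℝ) / N, (((σ i : ℕ) + 1 : ℝ) / N)))

/-- Step-function identity: the Riemann sum is the integral of a step function. -/
lemma step_eq (f : ℝ →ᵇ ℝ) {N : ℕ} (hN : 0 < N) :
    ∫ x in Icc (0:ℝ) 1, f ((⌈(N:ℝ) * x⌉ : ℝ) / N) =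
      (N:ℝ)⁻¹ * ∑ i : Fin N, f (((i:ℕ) + 1 : ℝ) / N) := by
  have hNR : (0:ℝ) < N := by exact_mod_cast hN
  set g : ℝ → ℝ := fun x => f ((⌈(N:ℝ) * x⌉ : ℝ) / N) with hg
  have key : ∀ k : ℕ, EqOn g (fun _ => f (((k:ℕ) + 1 : ℝ) / N))
      (Ioc ((k:ℝ)/N) (((k:ℝ)+1)/N)) := by
    intro k x hx
    have h1 : (k:ℝ) < (N:ℝ) * x := by
      have := hx.1
      calc (k:ℝ) = (N:ℝ) * ((k:ℝ)/N) := by field_simp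
      _ < (N:ℝ) * x := by exact (mul_lt_mul_iff_right₀ hNR).2 this
    have h2 : (N:ℝ) * x ≤ (k:ℝ) + 1 := by
      have := hx.2
      calc (N:ℝ) * x ≤ (N:ℝ) * (((k:ℝ)+1)/N) := (mul_le_mul_iff_right₀ hNR).2 this
      _ = (k:ℝ) + 1 := by field_simp
    have hceil : ⌈(N:ℝ) * x⌉ = (k:ℤ) + 1 := by
      rw [Int.ceil_eq_iff]
      constructor
      · push_cast; linarith
      · push_cast; linarith
    simp only [g, hceil]
    norm_num
  have hle : ∀ k : ℕ, (k:ℝ)/N ≤ ((k:ℝ)+1)/N := by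
    intro k
    gcongr
    linarith
  have integrable_piece : ∀ k : ℕ, IntervalIntegrable g volume ((k:ℝ)/N) (((k:ℝ)+1)/N) := by
    intro k
    rw [intervalIntegrable_iff_integrableOn_Ioc_of_le (hle k)]
    exact (integrableOn_const measure_Ioc_lt_top.ne).congr_fun
      (key k).symm measurableSet_Ioc
  have piece : ∀ k : ℕ, ∫ x in ((k:ℝ)/N)..(((k:ℝ)+1)/N), g x
      = (N:ℝ)⁻¹ * f (((k:ℝ) + 1) / N) := by
    intro k
    rw [intervalIntegral.integral_of_le (hle k),
      setIntegral_congr_fun measurableSet_Ioc (key k), setIntegral_const, measureReal_def,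
      Real.volume_Ioc]
    have : ((k:ℝ)+1)/N - (k:ℝ)/N = (N:ℝ)⁻¹ := by field_simp; ring
    rw [this, ENNReal.toReal_ofReal (by positivity)]
    simp [smul_eq_mul]
  have hsum : ∑ k ∈ Finset.range N, ∫ x in ((k:ℝ)/N)..(((k:ℝ)+1)/N), g x
      = ∫ x in (0:ℝ)..1, g x := by
    have := intervalIntegral.sum_integral_adjacent_intervals
      (f := g) (μ := volume) (a := fun k : ℕ => (k:ℝ)/N) (n := N)
      (fun k _ => by simpa using integrable_piece k)
    simpa [Nat.cast_add, Nat.cast_one, div_self hNR.ne'] using this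
  rw [integral_Icc_eq_integral_Ioc, ← intervalIntegral.integral_of_le zero_le_one, ← hsum,
    Fin.sum_univ_eq_sum_range (fun k : ℕ => f (((k:ℕ) + 1 : ℝ) / N)) N, Finset.mul_sum]
  exact Finset.sum_congr rfl fun k _ => piece k

/-- Riemann sums of a bounded continuous function converge to its integral on `[0,1]`. -/
lemma tendsto_riemann (f : ℝ →ᵇ ℝ) :
    Tendsto (fun N : ℕ => (N:ℝ)⁻¹ * ∑ i : Fin N, f (((i:ℕ) + 1 : ℝ) / N)) atTop
      (𝓝 (∫ x in Icc (0:ℝ) 1, f x)) := by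
  have hstep : Tendsto (fun N : ℕ => ∫ x in Icc (0:ℝ) 1, f ((⌈(N:ℝ) * x⌉ : ℝ) / N)) atTop
      (𝓝 (∫ x in Icc (0:ℝ) 1, f x)) := by
    apply MeasureTheory.tendsto_integral_of_dominated_convergence (fun _ => ‖f‖)
    · intro N
      have h1 : Measurable fun x : ℝ => ⌈(N:ℝ) * x⌉ :=
        (measurable_const.mul measurable_id).ceil
      have h2 : Measurable fun x : ℝ => ((⌈(N:ℝ) * x⌉ : ℤ) : ℝ) / N :=
        (measurable_from_top (f := fun z : ℤ => ((z : ℝ) / N))).comp h1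
      exact (f.continuous.measurable.comp h2).aestronglyMeasurable
    · exact integrable_const _
    · intro N
      filter_upwards with x
      exact f.norm_coe_le_norm _
    · filter_upwards with x
      have hc : Tendsto (fun N : ℕ => (⌈(N:ℝ) * x⌉ : ℝ) / N) atTop (𝓝 x) := by
        have hup : Tendsto (fun N : ℕ => x + 1/(N:ℝ)) atTop (𝓝 x) := by
          simpa using tendsto_const_nhds.add (tendsto_one_div_atTop_nhds_zero_nat (𝕜 := ℝ))
        apply tendsto_of_tendsto_of_tendsto_of_le_of_le' tendsto_const_nhds hup
        · filter_upwards [eventually_gt_atTop 0] with N hN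
          have hNR : (0:ℝ) < N := by exact_mod_cast hN
          rw [le_div_iff₀ hNR]
          calc x * N = N * x := mul_comm _ _
          _ ≤ ⌈(N:ℝ)*x⌉ := Int.le_ceil _
        · filter_upwards [eventually_gt_atTop 0] with N hN
          have hNR : (0:ℝ) < N := by exact_mod_cast hN
          rw [div_le_iff₀ hNR]
          have h := Int.ceil_lt_add_one ((N:ℝ)*x)
          calc (⌈(N:ℝ)*x⌉:ℝ) ≤ N*x + 1 := by linarith
          _ = (x + 1/N) * N := by field_simp
      exact (f.continuous.tendsto x).comp hc
  have heq : ∀ᶠ N : ℕ in atTop,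
      (∫ x in Icc (0:ℝ) 1, f ((⌈(N:ℝ) * x⌉ : ℝ) / N))
        = (N:ℝ)⁻¹ * ∑ i : Fin N, f (((i:ℕ) + 1 : ℝ) / N) := by
    filter_upwards [eventually_gt_atTop 0] with N hN
    exact step_eq f hN
  exact hstep.congr' heq

/-- Two finite Borel measures on `ℝ` agreeing on integrals of real-valued bounded
continuous functions are equal. -/
lemma ext_bcf {μ ν : Measure ℝ} [IsFiniteMeasure μ] [IsFiniteMeasure ν]
    (h : ∀ f : ℝ →ᵇ ℝ, ∫ x, f x ∂μ = ∫ x, f x ∂ν) : μ = ν := by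
  apply MeasureTheory.ext_of_forall_lintegral_eq_of_IsFiniteMeasure
  intro f
  have hfin1 : ∫⁻ x, f x ∂μ ≠ ∞ := (lintegral_lt_top_of_nnreal μ f).ne
  have hfin2 : ∫⁻ x, f x ∂ν ≠ ∞ := (lintegral_lt_top_of_nnreal ν f).ne
  rw [← ENNReal.toReal_eq_toReal_iff' hfin1 hfin2,
    BoundedContinuousFunction.toReal_lintegral_coe_eq_integral f μ,
    BoundedContinuousFunction.toReal_lintegral_coe_eq_integral f ν]
  exact h (BoundedContinuousFunction.comp _ isometry_subtype_coe.lipschitz f)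

/-- Integral against an empirical measure is a Riemann-type sum. -/
lemma emp_integral (N : ℕ) (τ : Equiv.Perm (Fin N)) (g : (ℝ × ℝ) →ᵇ ℝ) :
    ∫ p, g p ∂(empMeasure N τ)
      = (N:ℝ)⁻¹ * ∑ i : Fin N,
          g ((((i:ℕ) + 1 : ℝ)) / N, (((τ i : ℕ) + 1 : ℝ)) / N) := by
  rw [empMeasure, integral_smul_measure, integral_finset_sum_measure
    (fun i _ => g.integrable _)]
  simp [integral_dirac, smul_eq_mul]

/-- If empirical measures of permutations converge weakly to a probability
measure `μ` on `[0,1]²`, then `μ` has uniform marginals, i.e. `μ` is a permuton. -/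
theorem limit_of_empirical_is_permuton (σ : ∀ N : ℕ, Equiv.Perm (Fin N))
    (μ : Measure (ℝ × ℝ)) [IsProbabilityMeasure μ]
    (hconv : ∀ f : (ℝ × ℝ) →ᵇ ℝ,
      Tendsto (fun N => ∫ p, f p ∂(empMeasure N (σ N))) atTop (𝓝 (∫ p, f p ∂μ))) :
    μ.map Prod.fst = volume.restrict (Icc (0 : ℝ) 1) ∧
    μ.map Prod.snd = volume.restrict (Icc (0 : ℝ) 1) := by
  have hfinv : IsFiniteMeasure (volume.restrict (Icc (0:ℝ) 1)) := by
    constructor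
    rw [Measure.restrict_apply_univ, Real.volume_Icc]
    exact ofReal_lt_top
  constructor
  · have : IsProbabilityMeasure (μ.map Prod.fst) :=
      Measure.isProbabilityMeasure_map measurable_fst.aemeasurable
    apply ext_bcf
    intro f
    have hcomp := hconv (f.compContinuous ⟨Prod.fst, continuous_fst⟩)
    have heq : ∀ N : ℕ, ∫ p, (f.compContinuous ⟨Prod.fst, continuous_fst⟩) p
        ∂(empMeasure N (σ N)) = (N:ℝ)⁻¹ * ∑ i : Fin N, f (((i:ℕ) + 1 : ℝ) / N) := by
      intro N
      rw [emp_integral]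
      rfl
    rw [integral_map measurable_fst.aemeasurable f.continuous.aestronglyMeasurable]
    have hlim : Tendsto (fun N : ℕ => (N:ℝ)⁻¹ * ∑ i : Fin N, f (((i:ℕ) + 1 : ℝ) / N))
        atTop (𝓝 (∫ p, f p.1 ∂μ)) := by
      refine hcomp.congr fun N => heq N
    have := tendsto_nhds_unique hlim (tendsto_riemann f)
    exact this
  · have : IsProbabilityMeasure (μ.map Prod.snd) :=
      Measure.isProbabilityMeasure_map measurable_snd.aemeasurable
    apply ext_bcf
    intro f
    have hcomp := hconv (f.compContinuous ⟨Prod.snd, continuous_snd⟩)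
    have heq : ∀ N : ℕ, ∫ p, (f.compContinuous ⟨Prod.snd, continuous_snd⟩) p
        ∂(empMeasure N (σ N)) = (N:ℝ)⁻¹ * ∑ i : Fin N, f (((i:ℕ) + 1 : ℝ) / N) := by
      intro N
      rw [emp_integral]
      congr 1
      exact Equiv.sum_comp (σ N) (fun j => f (((j : ℕ) + 1 : ℝ) / N))
    rw [integral_map measurable_snd.aemeasurable f.continuous.aestronglyMeasurable]
    have hlim : Tendsto (fun N : ℕ => (N:ℝ)⁻¹ * ∑ i : Fin N, f (((i:ℕ) + 1 : ℝ) / N))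
        atTop (𝓝 (∫ p, f p.2 ∂μ)) := by
      refine hcomp.congr fun N => heq N
    have := tendsto_nhds_unique hlim (tendsto_riemann f)
    exact this
end

section
/- Deterministic limit criterion for random measures: let K be a compact metric space and μ a random Borel probability measure on K. Let X, Y be two samples drawn independently from a single realization of μ, and let Z be a sample from an independent realization of μ. If the pair (X,Y) has the same joint distribution (as a K²-valued random variable) as (X,Z), then μ is almost surely deterministic: there exists ν ∈ M(K) with μ = ν almost surely. -/
open MeasureTheory Set

lemma countable_generatePiSystem' {α : Type*} {S : Set (Set α)} (hS : S.Countable) :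
    (generatePiSystem S).Countable := by
  have hsub : generatePiSystem S ⊆ Set.sInter '' {T : Set (Set α) | T.Finite ∧ T ⊆ S} := by
    intro t ht
    induction ht with
    | base h => exact ⟨{_}, ⟨finite_singleton _, singleton_subset_iff.mpr h⟩, sInter_singleton _⟩
    | inter hs htt hne ihs iht =>
      obtain ⟨T1, ⟨hf1, hs1⟩, rfl⟩ := ihs
      obtain ⟨T2, ⟨hf2, hs2⟩, rfl⟩ := iht
      exact ⟨T1 ∪ T2, ⟨hf1.union hf2, union_subset hs1 hs2⟩, sInter_union T1 T2⟩
  exact ((Set.countable_setOf_finite_subset hS).image _).mono hsub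

/-- Deterministic limit criterion for random measures: let `K` be a compact metric
space and `μ : Ω → Measure K` a random Borel probability measure on `K`. The joint
law of two samples `(X,Y)` drawn independently from a single realization of `μ` is
`P.bind (fun ω => (μ ω).prod (μ ω))`; the joint law of `(X,Z)` where `Z` comes from
an independent realization is `(P.bind μ).prod (P.bind μ)`. If these joint laws
coincide, then `μ` is almost surely deterministic. -/
theorem random_measure_deterministic
    {Ω : Type*} [MeasurableSpace Ω] (P : Measure Ω) [IsProbabilityMeasure P]
    {K : Type*} [MetricSpace K] [CompactSpace K] [MeasurableSpace K] [BorelSpace K]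
    (μ : Ω → Measure K) (hmeas : Measurable μ)
    (hprob : ∀ ω, IsProbabilityMeasure (μ ω))
    (h : P.bind (fun ω => (μ ω).prod (μ ω)) = (P.bind μ).prod (P.bind μ)) :
    ∃ ν : Measure K, ∀ᵐ ω ∂P, μ ω = ν := by
  classical
  set ν := P.bind μ with hν
  have hνuniv : ν univ = 1 := by
    rw [hν, Measure.bind_apply MeasurableSet.univ hmeas.aemeasurable]
    simp [(hprob _).measure_univ]
  haveI : IsProbabilityMeasure ν := ⟨hνuniv⟩
  -- measurability of the product kernel
  let κ : ProbabilityTheory.Kernel Ω K := ⟨μ, hmeas⟩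
  haveI : ProbabilityTheory.IsMarkovKernel κ := ⟨hprob⟩
  have hprodmeas : Measurable (fun ω => (μ ω).prod (μ ω)) := by
    have := (κ.prod κ).measurable
    have heq : ∀ ω, (κ.prod κ) ω = (μ ω).prod (μ ω) := fun ω =>
      ProbabilityTheory.Kernel.prod_apply κ κ ω
    simpa [funext heq] using this
  -- the per-set key lemma
  have key : ∀ A : Set K, MeasurableSet A → ∀ᵐ ω ∂P, μ ω A = ν A := by
    intro A hA
    have hle : ∀ ω, μ ω A ≤ 1 := fun ω => by
      haveI := hprob ω; exact prob_le_one
    have hνA : ν A = ∫⁻ ω, μ ω A ∂P := Measure.bind_apply hA hmeas.aemeasurable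
    have h2 : ∫⁻ ω, μ ω A * μ ω A ∂P = ν A * ν A := by
      calc ∫⁻ ω, μ ω A * μ ω A ∂P
          = ∫⁻ ω, ((μ ω).prod (μ ω)) (A ×ˢ A) ∂P := by
            simp [Measure.prod_prod]
        _ = (P.bind fun ω => (μ ω).prod (μ ω)) (A ×ˢ A) :=
            (Measure.bind_apply (hA.prod hA) hprodmeas.aemeasurable).symm
        _ = (ν.prod ν) (A ×ˢ A) := by rw [h]
        _ = ν A * ν A := Measure.prod_prod A A
    set c := (ν A).toReal with hc
    set G := fun ω => (μ ω A).toReal with hG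
    have hcoe : Measurable (fun ω => μ ω A) := (Measure.measurable_coe hA).comp hmeas
    have hGmeas : Measurable G := hcoe.ennreal_toReal
    have hGle : ∀ ω, G ω ≤ 1 := fun ω => by
      simpa using ENNReal.toReal_mono ENNReal.one_ne_top (hle ω)
    have hGnonneg : ∀ ω, 0 ≤ G ω := fun ω => ENNReal.toReal_nonneg
    have hGint : Integrable G P := by
      refine Integrable.mono' (integrable_const 1) hGmeas.aestronglyMeasurable ?_
      exact Filter.Eventually.of_forall fun ω => by
        rw [Real.norm_eq_abs, abs_of_nonneg (hGnonneg ω)]; exact hGle ω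
    have hG2int : Integrable (fun ω => G ω * G ω) P := by
      refine Integrable.mono' (integrable_const 1) (hGmeas.mul hGmeas).aestronglyMeasurable ?_
      exact Filter.Eventually.of_forall fun ω => by
        rw [Real.norm_eq_abs, abs_of_nonneg (mul_nonneg (hGnonneg ω) (hGnonneg ω))]
        exact mul_le_one₀ (hGle ω) (hGnonneg ω) (hGle ω)
    have hlt : ∀ᵐ ω ∂P, μ ω A < ⊤ :=
      Filter.Eventually.of_forall fun ω => lt_of_le_of_lt (hle ω) (by simp)
    have hEG : ∫ ω, G ω ∂P = c := by
      rw [hG]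
      rw [integral_toReal hcoe.aemeasurable hlt, ← hνA]
    have hEG2 : ∫ ω, G ω * G ω ∂P = c * c := by
      have hmul : ∀ ω, G ω * G ω = ((μ ω A) * (μ ω A)).toReal := fun ω =>
        (ENNReal.toReal_mul).symm
      rw [funext hmul]
      rw [integral_toReal (f := fun ω => μ ω A * μ ω A) (hcoe.mul hcoe).aemeasurable
        (hlt.mono fun ω hω => ENNReal.mul_lt_top hω hω), h2, ENNReal.toReal_mul]
    have hvar : ∫ ω, (G ω - c) ^ 2 ∂P = 0 := by
      have hexp : (fun ω => (G ω - c) ^ 2)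
          = fun ω => (G ω * G ω - (2 * c) * G ω) + c * c := by
        funext ω; ring
      rw [hexp, integral_add (f := fun ω => G ω * G ω - (2 * c) * G ω)
          (g := fun _ => c * c) (hG2int.sub (hGint.const_mul (2 * c))) (integrable_const _),
        integral_sub hG2int (hGint.const_mul (2 * c)), integral_const_mul, hEG, hEG2]
      simp [measure_univ]
      ring
    have hzero : (fun ω => (G ω - c) ^ 2) =ᵐ[P] 0 :=
      (integral_eq_zero_iff_of_nonneg (fun ω => sq_nonneg _)
        (by
          have : Integrable (fun ω => (G ω * G ω - (2 * c) * G ω) + c * c) P :=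
            (hG2int.sub (hGint.const_mul (2 * c))).add (integrable_const _)
          refine this.congr (Filter.Eventually.of_forall fun ω => by ring))).mp hvar
    filter_upwards [hzero] with ω hω
    have hGc : G ω = c := by
      have := sub_eq_zero.mp (pow_eq_zero_iff (n := 2) (by norm_num) |>.mp hω)
      linarith [this]
    exact (ENNReal.toReal_eq_toReal_iff' (lt_of_le_of_lt (hle ω) (by simp)).ne
      (lt_of_le_of_lt prob_le_one (by simp : (1:ENNReal) < ⊤)).ne).mp hGc
  -- countable π-system generating the Borel σ-algebra
  obtain ⟨b, hbc, -, hb⟩ := TopologicalSpace.exists_countable_basis K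
  set T := generatePiSystem b with hT
  have hTc : T.Countable := countable_generatePiSystem' hbc
  have hTgen : ‹MeasurableSpace K› = MeasurableSpace.generateFrom T := by
    rw [hT, generateFrom_generatePiSystem_eq, ← hb.borel_eq_generateFrom,
      BorelSpace.measurable_eq (α := K)]
  have hTmeas : ∀ s ∈ T, MeasurableSet s := fun s hs => by
    rw [hTgen]; exact MeasurableSpace.measurableSet_generateFrom hs
  have hae : ∀ᵐ ω ∂P, ∀ s (_ : s ∈ T), μ ω s = ν s :=
    (ae_ball_iff hTc).mpr fun s hs => key s (hTmeas s hs)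
  refine ⟨ν, ?_⟩
  filter_upwards [hae] with ω hω
  haveI := hprob ω
  exact ext_of_generate_finite T hTgen (isPiSystem_generatePiSystem b)
    (fun s hs => hω s hs) (by simp [hνuniv, (hprob ω).measure_univ])
end
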